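/- Let N = (N_1,…,N_n) be an sNA random vector with nonnegative components such that each N_i and the product N_1⋯N_n are integrable. Then E(N_1 ⋯ N_n) ≤ E(N_1) ⋯ E(N_n). In particular, for a point process η whose count vectors (η(B_1),…,η(B_n)) over pairwise disjoint bounded Borel sets B_1,…,B_n ⊆ ℝ^d are sNA, the moment measures satisfy E(η(B_1)⋯η(B_n)) ≤ E(η(B_1))⋯E(η(B_n)). -/

import Mathlib

open MeasureTheory ProbabilityTheory

/-- `f` depends only on the coordinates in `A`. -/
def DepOn {n : ℕ} (f : (Fin n → ℝ) → ℝ) (A : Set (Fin n)) : Prop :=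
  ∀ x y : Fin n → ℝ, (∀ i ∈ A, x i = y i) → f x = f y

/-- `f` is bounded. -/
def IsBdd {α : Type*} (f : α → ℝ) : Prop :=
  ∃ C : ℝ, ∀ x, |f x| ≤ C

/-- A random vector `X = (X_1, …, X_n)` is negatively associated in sequence (sNA):
for every `i = 1, …, n-1`, every `t ∈ ℝ` and every bounded measurable `f` nondecreasing in
each coordinate (and depending only on the coordinates after `i`),
`Cov(1{X_i > t}, f(X_{i+1}, …, X_n)) ≤ 0`. -/
def SNA {Ω : Type*} [MeasurableSpace Ω] (μ : Measure Ω) {n : ℕ}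
    (X : Ω → Fin n → ℝ) : Prop :=
  ∀ (i : Fin n) (t : ℝ) (f : (Fin n → ℝ) → ℝ), (i : ℕ) + 1 < n →
    Measurable f → Monotone f → IsBdd f → DepOn f {j | i < j} →
    ∫ ω, (if t < X ω i then (1 : ℝ) else 0) * f (X ω) ∂μ ≤
      (μ {ω | t < X ω i}).toReal * ∫ ω, f (X ω) ∂μ

section Auxiliary

open Set Filter

variable {Ω : Type*} [MeasurableSpace Ω] {n : ℕ}

/-- Integrability of the layer-cake kernel. -/
lemma sna_intg (μ : Measure Ω) [IsProbabilityMeasure μ] {M : ℝ}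
    (Z : Ω → ℝ) (hZ : Measurable Z)
    (h : Ω → ℝ) (hh : Measurable h) {C : ℝ} (hC : ∀ ω, |h ω| ≤ C) :
    Integrable (Function.uncurry fun t ω => (if t < Z ω then (1:ℝ) else 0) * h ω)
      ((volume.restrict (Ioc 0 M)).prod μ) := by
  haveI : IsFiniteMeasure (volume.restrict (Ioc 0 M)) :=
    ⟨by rw [Measure.restrict_apply_univ]; simp [Real.volume_Ioc]⟩
  have hset : MeasurableSet {p : ℝ × Ω | p.1 < Z p.2} :=
    measurableSet_lt measurable_fst (hZ.comp measurable_snd)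
  have hmeas : Measurable (Function.uncurry fun t ω => (if t < Z ω then (1:ℝ) else 0) * h ω) := by
    exact (Measurable.ite hset measurable_const measurable_const).mul (hh.comp measurable_snd)
  refine ⟨hmeas.aestronglyMeasurable, ?_⟩
  refine HasFiniteIntegral.of_bounded (C := C) (ae_of_all _ fun p => ?_)
  simp only [Function.uncurry, Real.norm_eq_abs, abs_mul]
  calc |if p.1 < Z p.2 then (1:ℝ) else 0| * |h p.2| ≤ 1 * |h p.2| := by
        apply mul_le_mul_of_nonneg_right _ (abs_nonneg _)
        split <;> simp
    _ ≤ C := by rw [one_mul]; exact hC p.2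

/-- Layer-cake representation of `∫ Z·h` for a bounded nonnegative `Z`. -/
lemma sna_layer_eq (μ : Measure Ω) [IsProbabilityMeasure μ] {M : ℝ} (hM : 0 < M)
    (Z : Ω → ℝ) (hZ : Measurable Z) (hZ0 : ∀ ω, 0 ≤ Z ω) (hZM : ∀ ω, Z ω ≤ M)
    (h : Ω → ℝ) (hh : Measurable h) {C : ℝ} (hC : ∀ ω, |h ω| ≤ C)
    (hg : Integrable (Function.uncurry fun t ω => (if t < Z ω then (1:ℝ) else 0) * h ω)
      ((volume.restrict (Ioc 0 M)).prod μ)) :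
    ∫ ω, Z ω * h ω ∂μ =
      ∫ t in Ioc 0 M, ∫ ω, (if t < Z ω then (1:ℝ) else 0) * h ω ∂μ := by
  haveI : IsFiniteMeasure (volume.restrict (Ioc 0 M)) :=
    ⟨by rw [Measure.restrict_apply_univ]; simp [Real.volume_Ioc]⟩
  have swap := integral_integral_swap (f := fun t ω => (if t < Z ω then (1:ℝ) else 0) * h ω) hg
  rw [swap]
  refine integral_congr_ae (ae_of_all _ fun ω => ?_)
  have key : ∫ t in Ioc 0 M, (if t < Z ω then (1:ℝ) else 0) = Z ω := by
    have heq : (fun t => if t < Z ω then (1:ℝ) else 0)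
        = Set.indicator (Iio (Z ω)) (fun _ => (1:ℝ)) := by
      funext t; simp [Set.indicator, Set.mem_Iio]
    rw [heq, setIntegral_indicator measurableSet_Iio]
    have hinter : Ioc 0 M ∩ Iio (Z ω) = Ioo 0 (Z ω) := by
      ext t
      simp only [mem_inter_iff, mem_Ioc, mem_Iio, mem_Ioo]
      constructor
      · rintro ⟨⟨h1, _⟩, h2⟩; exact ⟨h1, h2⟩
      · rintro ⟨h1, h2⟩; exact ⟨⟨h1, le_trans (le_of_lt h2) (hZM ω)⟩, h2⟩
    rw [hinter, setIntegral_const]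
    simp only [Real.volume_Ioo, sub_zero, smul_eq_mul, mul_one]
    simp only [Measure.real, Real.volume_Ioo, sub_zero]
    exact ENNReal.toReal_ofReal (hZ0 ω)
  show Z ω * h ω = ∫ t in Ioc 0 M, (if t < Z ω then (1:ℝ) else 0) * h ω
  rw [integral_mul_const, key]

/-- Key inequality: a covariance bound at every level `t` upgrades to
`E[Z h] ≤ E[Z] E[h]` for bounded nonnegative `Z`. -/
lemma sna_keyB (μ : Measure Ω) [IsProbabilityMeasure μ] {M : ℝ} (hM : 0 < M)
    (Z : Ω → ℝ) (hZ : Measurable Z) (hZ0 : ∀ ω, 0 ≤ Z ω) (hZM : ∀ ω, Z ω ≤ M)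
    (h : Ω → ℝ) (hh : Measurable h) {C : ℝ} (hC : ∀ ω, |h ω| ≤ C)
    (hcov : ∀ t : ℝ, ∫ ω, (if t < Z ω then (1:ℝ) else 0) * h ω ∂μ ≤
      (μ {ω | t < Z ω}).toReal * ∫ ω, h ω ∂μ) :
    ∫ ω, Z ω * h ω ∂μ ≤ (∫ ω, Z ω ∂μ) * ∫ ω, h ω ∂μ := by
  have hg := sna_intg μ (M := M) Z hZ h hh hC
  have hg1 := sna_intg μ (M := M) Z hZ (fun _ => (1:ℝ)) measurable_const
    (C := 1) (fun ω => by norm_num)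
  have hA : ∫ ω, Z ω * h ω ∂μ
      = ∫ t in Ioc 0 M, ∫ ω, (if t < Z ω then (1:ℝ) else 0) * h ω ∂μ :=
    sna_layer_eq μ hM Z hZ hZ0 hZM h hh hC hg
  have ind_eq : ∀ t : ℝ, ∫ ω, (if t < Z ω then (1:ℝ) else 0) ∂μ = (μ {ω | t < Z ω}).toReal := by
    intro t
    have heq : (fun ω => if t < Z ω then (1:ℝ) else 0)
        = Set.indicator {ω | t < Z ω} (fun _ => (1:ℝ)) := by
      funext ω; simp [Set.indicator]
    rw [heq, integral_indicator (measurableSet_lt measurable_const hZ), setIntegral_const]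
    simp; rfl
  have hB : ∫ ω, Z ω ∂μ = ∫ t in Ioc 0 M, (μ {ω | t < Z ω}).toReal := by
    have h2 := sna_layer_eq μ hM Z hZ hZ0 hZM (fun _ => (1:ℝ)) measurable_const
      (C := 1) (fun ω => by norm_num) hg1
    simp only [mul_one] at h2
    rw [h2]
    exact integral_congr_ae (ae_of_all _ fun t => ind_eq t)
  have hI1 : Integrable (fun t => ∫ ω, (if t < Z ω then (1:ℝ) else 0) * h ω ∂μ)
      (volume.restrict (Ioc 0 M)) := hg.integral_prod_left
  have hI2 : Integrable (fun t => (μ {ω | t < Z ω}).toReal)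
      (volume.restrict (Ioc 0 M)) := by
    have := hg1.integral_prod_left
    simp only [mul_one] at this
    exact this.congr (ae_of_all _ fun t => ind_eq t)
  rw [hA, hB]
  calc ∫ t in Ioc 0 M, ∫ ω, (if t < Z ω then (1:ℝ) else 0) * h ω ∂μ
      ≤ ∫ t in Ioc 0 M, (μ {ω | t < Z ω}).toReal * ∫ ω, h ω ∂μ :=
        integral_mono hI1 (hI2.mul_const _) fun t => hcov t
    _ = (∫ t in Ioc 0 M, (μ {ω | t < Z ω}).toReal) * ∫ ω, h ω ∂μ := integral_mul_const _ _

/-- Coordinatewise truncation preserves sNA. -/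
lemma sna_trunc {μ : Measure Ω} [IsProbabilityMeasure μ] {N : Ω → Fin n → ℝ}
    (hsna : SNA μ N) (M : ℝ) : SNA μ (fun ω j => min (N ω j) M) := by
  intro i t f hin hf hmono hbdd hdep
  by_cases ht : t < M
  · set F : (Fin n → ℝ) → ℝ := fun x => f (fun j => min (x j) M) with hF
    have hFmeas : Measurable F :=
      hf.comp (measurable_pi_lambda _ fun j => (measurable_pi_apply j).min measurable_const)
    have hFmono : Monotone F := fun x y hxy =>
      hmono fun j => min_le_min (hxy j) le_rfl
    have hFbdd : IsBdd F := by obtain ⟨C, hC⟩ := hbdd; exact ⟨C, fun x => hC _⟩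
    have hFdep : DepOn F {j | i < j} := by
      intro x y hxy
      exact hdep _ _ fun j hj => by rw [hxy j hj]
    have key := hsna i t F hin hFmeas hFmono hFbdd hFdep
    have hseteq : ∀ ω, (t < min (N ω i) M) ↔ (t < N ω i) := by
      intro ω; rw [lt_min_iff]; exact ⟨fun h => h.1, fun h => ⟨h, ht⟩⟩
    have hs : {ω | t < min (N ω i) M} = {ω | t < N ω i} := Set.ext fun ω => hseteq ω
    have hint1 : ∀ ω, (if t < min (N ω i) M then (1:ℝ) else 0)
        = (if t < N ω i then (1:ℝ) else 0) := by
      intro ω; simp only [hseteq ω]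
    calc ∫ ω, (if t < min (N ω i) M then (1:ℝ) else 0) * f (fun j => min (N ω j) M) ∂μ
        = ∫ ω, (if t < N ω i then (1:ℝ) else 0) * F (N ω) ∂μ := by
          refine integral_congr_ae (ae_of_all _ fun ω => ?_)
          show (if t < min (N ω i) M then (1:ℝ) else 0) * f (fun j => min (N ω j) M)
              = (if t < N ω i then (1:ℝ) else 0) * F (N ω)
          rw [hint1 ω]
      _ ≤ (μ {ω | t < N ω i}).toReal * ∫ ω, F (N ω) ∂μ := key
      _ = (μ {ω | t < min (N ω i) M}).toReal * ∫ ω, f (fun j => min (N ω j) M) ∂μ := by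
          rw [hs]
  · have hempty : ∀ ω, ¬ (t < min (N ω i) M) := fun ω h =>
      ht (lt_of_lt_of_le h (min_le_right _ _))
    have h1 : ∀ ω, (if t < min (N ω i) M then (1:ℝ) else 0) = 0 := by
      intro ω; simp [hempty ω]
    have h2 : {ω | t < min (N ω i) M} = (∅ : Set Ω) := by
      ext ω
      simp only [Set.mem_setOf_eq, Set.mem_empty_iff_false, iff_false]
      exact hempty ω
    simp only [h1, h2, zero_mul, integral_zero, measure_empty, ENNReal.toReal_zero]
    norm_num

/-- Monotonicity of a finite product of clamps. -/
lemma sna_monotone_prod_clamp {s : Finset (Fin n)} {M : ℝ} :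
    Monotone (fun x : Fin n → ℝ => ∏ j ∈ s, max 0 (min (x j) M)) := by
  classical
  induction s using Finset.induction with
  | empty => simpa using monotone_const
  | @insert a s ha ih =>
      intro x y hxy
      simp only [Finset.prod_insert ha]
      refine mul_le_mul ?_ (ih hxy) ?_ ?_
      · exact max_le_max le_rfl (min_le_min (hxy a) le_rfl)
      · exact Finset.prod_nonneg fun j _ => le_max_left _ _
      · exact le_max_left _ _

/-- The bounded case of Statement 14. -/
lemma sna_bdd_main (μ : Measure Ω) [IsProbabilityMeasure μ] {M : ℝ} (hM : 0 < M)
    (N : Ω → Fin n → ℝ) (hN : Measurable N)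
    (h0 : ∀ ω i, 0 ≤ N ω i) (hub : ∀ ω i, N ω i ≤ M) (hsna : SNA μ N) :
    ∫ ω, ∏ i, N ω i ∂μ ≤ ∏ i, ∫ ω, N ω i ∂μ := by
  classical
  have claim : ∀ m k : ℕ, n ≤ k + m →
      ∫ ω, ∏ j ∈ Finset.univ.filter (fun j : Fin n => k ≤ (j:ℕ)), N ω j ∂μ ≤
        ∏ j ∈ Finset.univ.filter (fun j : Fin n => k ≤ (j:ℕ)), ∫ ω, N ω j ∂μ := by
    intro m
    induction m with
    | zero =>
        intro k hk
        have hfe : Finset.univ.filter (fun j : Fin n => k ≤ (j:ℕ)) = ∅ := by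
          refine Finset.filter_eq_empty_iff.mpr fun j _ => ?_
          have := j.isLt; omega
        rw [hfe]
        simp
    | succ m ih =>
        intro k hk
        by_cases hkn : k < n
        · set i : Fin n := ⟨k, hkn⟩ with hi
          set s : Finset (Fin n) := Finset.univ.filter (fun j : Fin n => k + 1 ≤ (j:ℕ)) with hsdef
          have hnotmem : i ∉ s := by simp [hsdef, hi]
          have hsplit : Finset.univ.filter (fun j : Fin n => k ≤ (j:ℕ)) = insert i s := by
            ext j
            simp only [Finset.mem_filter, Finset.mem_univ, true_and, Finset.mem_insert, hsdef]
            constructor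
            · intro hj
              rcases eq_or_lt_of_le hj with hj' | hj'
              · left; exact Fin.ext hj'.symm
              · right; omega
            · rintro (rfl | hj)
              · exact le_rfl
              · omega
          -- the monotone bounded function of the later coordinates
          set f : (Fin n → ℝ) → ℝ := fun x => ∏ j ∈ s, max 0 (min (x j) M) with hfdef
          have hfN : ∀ ω, f (N ω) = ∏ j ∈ s, N ω j := by
            intro ω
            refine Finset.prod_congr rfl fun j _ => ?_
            rw [min_eq_left (hub ω j), max_eq_right (h0 ω j)]
          have hfmeas : Measurable f :=
            Finset.measurable_prod _ fun j _ =>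
              (measurable_const.max ((measurable_pi_apply j).min measurable_const))
          have hfmono : Monotone f := sna_monotone_prod_clamp
          have hfbd : ∀ x, |f x| ≤ M ^ s.card := by
            intro x
            have hnn : 0 ≤ f x := Finset.prod_nonneg fun j _ => le_max_left _ _
            rw [abs_of_nonneg hnn, hfdef]
            calc ∏ j ∈ s, max 0 (min (x j) M) ≤ ∏ j ∈ s, M := by
                  refine Finset.prod_le_prod (fun j _ => le_max_left _ _) fun j _ => ?_
                  exact max_le (le_of_lt hM) (min_le_right _ _)
              _ = M ^ s.card := Finset.prod_const M
          have hfbdd : IsBdd f := ⟨M ^ s.card, hfbd⟩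
          have hfdep : DepOn f {j | i < j} := by
            intro x y hxy
            refine Finset.prod_congr rfl fun j hj => ?_
            have hmem : j ∈ {j : Fin n | i < j} := by
              simp only [hsdef, Finset.mem_filter] at hj
              simp only [Set.mem_setOf_eq, Fin.lt_def, hi]
              omega
            rw [hxy j hmem]
          have hZmeas : Measurable (fun ω => N ω i) := (measurable_pi_apply i).comp hN
          have hhmeas : Measurable (fun ω => f (N ω)) := hfmeas.comp hN
          have hcov : ∀ t : ℝ, ∫ ω, (if t < N ω i then (1:ℝ) else 0) * f (N ω) ∂μ ≤
              (μ {ω | t < N ω i}).toReal * ∫ ω, f (N ω) ∂μ := by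
            intro t
            by_cases hlast : (i : ℕ) + 1 < n
            · exact hsna i t f hlast hfmeas hfmono hfbdd hfdep
            · -- the set of later coordinates is empty, `f ≡ 1`
              have hse : s = ∅ := by
                refine Finset.filter_eq_empty_iff.mpr fun j _ => ?_
                have := j.isLt
                simp only [hi] at hlast ⊢
                omega
              have hf1 : ∀ x, f x = 1 := by intro x; rw [hfdef, hse]; simp
              simp only [hf1, mul_one]
              have := sna_keyB μ hM (fun ω => N ω i) hZmeas (fun ω => h0 ω i)
                (fun ω => hub ω i) (fun _ => (1:ℝ)) measurable_const (C := 1)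
                (fun ω => by norm_num)
              -- here we just compute both sides directly
              have heq : (fun ω => if t < N ω i then (1:ℝ) else 0)
                  = Set.indicator {ω | t < N ω i} (fun _ => (1:ℝ)) := by
                funext ω; simp [Set.indicator]
              rw [heq, integral_indicator (measurableSet_lt measurable_const hZmeas),
                setIntegral_const]
              simp; exact le_rfl
          have hkey := sna_keyB μ hM (fun ω => N ω i) hZmeas (fun ω => h0 ω i)
            (fun ω => hub ω i) (fun ω => f (N ω)) hhmeas (C := M ^ s.card)
            (fun ω => hfbd _) hcov
          have hih := ih (k + 1) (by omega)
          have hZnn : 0 ≤ ∫ ω, N ω i ∂μ := integral_nonneg fun ω => h0 ω i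
          calc ∫ ω, ∏ j ∈ Finset.univ.filter (fun j : Fin n => k ≤ (j:ℕ)), N ω j ∂μ
              = ∫ ω, N ω i * f (N ω) ∂μ := by
                refine integral_congr_ae (ae_of_all _ fun ω => ?_)
                show ∏ j ∈ Finset.univ.filter (fun j : Fin n => k ≤ (j:ℕ)), N ω j
                    = N ω i * f (N ω)
                rw [hsplit, Finset.prod_insert hnotmem, hfN ω]
            _ ≤ (∫ ω, N ω i ∂μ) * ∫ ω, f (N ω) ∂μ := hkey
            _ = (∫ ω, N ω i ∂μ) * ∫ ω, ∏ j ∈ s, N ω j ∂μ := by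
                congr 1
                exact integral_congr_ae (ae_of_all _ fun ω => hfN ω)
            _ ≤ (∫ ω, N ω i ∂μ) * ∏ j ∈ s, ∫ ω, N ω j ∂μ :=
                mul_le_mul_of_nonneg_left hih hZnn
            _ = ∏ j ∈ Finset.univ.filter (fun j : Fin n => k ≤ (j:ℕ)), ∫ ω, N ω j ∂μ := by
                rw [hsplit, Finset.prod_insert hnotmem]
        · have hfe : Finset.univ.filter (fun j : Fin n => k ≤ (j:ℕ)) = ∅ := by
            refine Finset.filter_eq_empty_iff.mpr fun j _ => ?_
            have := j.isLt; omega
          rw [hfe]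
          simp
  have := claim n 0 (by omega)
  simpa [Finset.filter_true_of_mem (fun (j : Fin n) _ => Nat.zero_le (j : ℕ))] using this

end Auxiliary

/-- if `N = (N_1, …, N_n)` is an sNA random vector with nonnegative
components such that each `N_i` and the product `N_1 ⋯ N_n` are integrable, then
`E(N_1 ⋯ N_n) ≤ E(N_1) ⋯ E(N_n)` (in particular this yields the comparison of the moment
measures of a point process whose count vectors over disjoint bounded Borel sets are
sNA with the product of the intensity measures). -/
theorem stmt14 {Ω : Type*} [MeasurableSpace Ω] (μ : Measure Ω) [IsProbabilityMeasure μ]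
    {n : ℕ} (N : Ω → Fin n → ℝ) (hN : Measurable N)
    (hnonneg : ∀ ω i, 0 ≤ N ω i)
    (hsna : SNA μ N)
    (hint : ∀ i, Integrable (fun ω => N ω i) μ)
    (hprod : Integrable (fun ω => ∏ i, N ω i) μ) :
    ∫ ω, ∏ i, N ω i ∂μ ≤ ∏ i, ∫ ω, N ω i ∂μ := by
  classical
  -- truncated vectors
  set Y : ℕ → Ω → Fin n → ℝ := fun k ω j => min (N ω j) ((k:ℝ) + 1) with hY
  have hYmeas : ∀ k, Measurable (Y k) := fun k =>
    measurable_pi_lambda _ fun j => ((measurable_pi_apply j).comp hN).min measurable_const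
  have hY0 : ∀ k ω j, 0 ≤ Y k ω j := fun k ω j =>
    le_min (hnonneg ω j) (by positivity)
  have hYub : ∀ k ω j, Y k ω j ≤ (k:ℝ) + 1 := fun k ω j => min_le_right _ _
  have hYle : ∀ k ω j, Y k ω j ≤ N ω j := fun k ω j => min_le_left _ _
  have hYint : ∀ k j, Integrable (fun ω => Y k ω j) μ := by
    intro k j
    refine (hint j).mono (((measurable_pi_apply j).comp (hYmeas k)).aestronglyMeasurable)
      (ae_of_all _ fun ω => ?_)
    rw [Real.norm_eq_abs, Real.norm_eq_abs, abs_of_nonneg (hY0 k ω j),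
      abs_of_nonneg (hnonneg ω j)]
    exact hYle k ω j
  -- the bounded case applies to every truncation
  have key : ∀ k : ℕ, ∫ ω, ∏ i, Y k ω i ∂μ ≤ ∏ i, ∫ ω, N ω i ∂μ := by
    intro k
    have h1 := sna_bdd_main μ (M := (k:ℝ) + 1) (by positivity) (Y k) (hYmeas k)
      (fun ω j => hY0 k ω j) (fun ω j => hYub k ω j) (sna_trunc hsna _)
    refine le_trans h1 (Finset.prod_le_prod (fun j _ => integral_nonneg fun ω => hY0 k ω j)
      fun j _ => ?_)
    exact integral_mono (hYint k j) (hint j) fun ω => hYle k ω j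
  -- pass to the limit by dominated convergence
  have hbound : ∀ k : ℕ, ∀ᵐ ω ∂μ, ‖∏ i, Y k ω i‖ ≤ ∏ i, N ω i := by
    intro k
    refine ae_of_all _ fun ω => ?_
    rw [Real.norm_eq_abs, abs_of_nonneg (Finset.prod_nonneg fun j _ => hY0 k ω j)]
    exact Finset.prod_le_prod (fun j _ => hY0 k ω j) fun j _ => hYle k ω j
  have hlim : ∀ᵐ ω ∂μ, Filter.Tendsto (fun k : ℕ => ∏ i, Y k ω i)
      Filter.atTop (nhds (∏ i, N ω i)) := by
    refine ae_of_all _ fun ω => ?_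
    refine tendsto_finset_prod _ fun j _ => ?_
    have hev : (fun k : ℕ => Y k ω j) =ᶠ[Filter.atTop] fun _ => N ω j := by
      refine Filter.eventually_atTop.2 ⟨⌈N ω j⌉₊, fun k hk => ?_⟩
      refine min_eq_left ?_
      have h1 := Nat.le_ceil (N ω j)
      have h2 : (⌈N ω j⌉₊ : ℝ) ≤ (k : ℝ) := Nat.cast_le.mpr hk
      linarith
    exact Filter.Tendsto.congr' hev.symm tendsto_const_nhds
  have htend : Filter.Tendsto (fun k : ℕ => ∫ ω, ∏ i, Y k ω i ∂μ)
      Filter.atTop (nhds (∫ ω, ∏ i, N ω i ∂μ)) := by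
    refine tendsto_integral_of_dominated_convergence (fun ω => ∏ i, N ω i) ?_ hprod hbound hlim
    exact fun k => (Finset.measurable_prod _ fun j _ =>
      (measurable_pi_apply j).comp (hYmeas k)).aestronglyMeasurable
  exact le_of_tendsto htend (Filter.Eventually.of_forall key)
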